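/- Let Λ ⊂ ℝᴹ be a cone that is complete with respect to K ⊂ ℝᴹ (i.e., p − q ∈ Λ for all p, q ∈ K). Then the Λ-convex hull of K equals the convex hull of K: K^Λ = K^co. -/

import Mathlib

/-- A set `Λ ⊆ ℝᴹ` is a cone if it is nonempty and closed under multiplication
by arbitrary real scalars. -/
def IsCone {M : ℕ} (Λ : Set (Fin M → ℝ)) : Prop :=
  Λ.Nonempty ∧ ∀ p ∈ Λ, ∀ α : ℝ, α • p ∈ Λ

/-- The `H_N`-condition on a family of pairs `(τᵢ, pᵢ)`, defined recursively:
a single pair satisfies it iff its weight is `1`; a family of `N ≥ 2` pairs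
satisfies it iff (after relabeling, i.e. permuting) the difference of the first
two points lies in `Λ` and the family obtained by merging the first two pairs
into their weighted combination satisfies the `H_{N-1}`-condition. -/
inductive HNCond {M : ℕ} (Λ : Set (Fin M → ℝ)) : List (ℝ × (Fin M → ℝ)) → Prop
  | single (p : Fin M → ℝ) : HNCond Λ [(1, p)]
  | perm {l l' : List (ℝ × (Fin M → ℝ))} (hp : l.Perm l') (h : HNCond Λ l') :
      HNCond Λ l
  | step (τ₁ τ₂ : ℝ) (p₁ p₂ : Fin M → ℝ) (rest : List (ℝ × (Fin M → ℝ)))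
      (hΛ : p₂ - p₁ ∈ Λ)
      (h : HNCond Λ
        ((τ₁ + τ₂, (τ₁ / (τ₁ + τ₂)) • p₁ + (τ₂ / (τ₁ + τ₂)) • p₂) :: rest)) :
      HNCond Λ ((τ₁, p₁) :: (τ₂, p₂) :: rest)

/-- A set `S` is `Λ`-convex if it contains the segment `[p, q]` whenever
`p, q ∈ S` with `p - q ∈ Λ`. -/
def LambdaConvex {M : ℕ} (Λ S : Set (Fin M → ℝ)) : Prop :=
  ∀ p ∈ S, ∀ q ∈ S, p - q ∈ Λ → segment ℝ p q ⊆ S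

/-- The `Λ`-convex hull of `K`: the smallest `Λ`-convex set containing `K`. -/
def lambdaHull {M : ℕ} (Λ K : Set (Fin M → ℝ)) : Set (Fin M → ℝ) :=
  ⋂₀ {S | K ⊆ S ∧ LambdaConvex Λ S}

private lemma list_sum_map_toList {α : Type} {β : Type*} [AddCommMonoid β]
    (t : Finset α) (f : α → β) : (t.toList.map f).sum = ∑ i ∈ t, f i := by
  rw [Finset.sum_eq_multiset_sum, ← Multiset.sum_coe, ← Multiset.map_coe, Finset.coe_toList]

private lemma key_lemma {M : ℕ} (Λ K : Set (Fin M → ℝ)) (hΛ : IsCone Λ)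
    (hcomp : ∀ p ∈ K, ∀ q ∈ K, p - q ∈ Λ)
    (S : Set (Fin M → ℝ)) (hKS : K ⊆ S) (hS : LambdaConvex Λ S) :
    ∀ (n : ℕ) (l : List (ℝ × (Fin M → ℝ))), l.length ≤ n →
      (∀ x ∈ l, 0 ≤ x.1 ∧ x.2 ∈ K) → (l.map Prod.fst).sum = 1 →
      (l.map (fun x => x.1 • x.2)).sum ∈ S := by
  intro n
  induction n with
  | zero =>
    intro l hl _ hsum
    rw [List.length_eq_zero_iff.mp (Nat.le_zero.mp hl)] at hsum
    simp at hsum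
  | succ n ih =>
    intro l hl hmem hsum
    match l with
    | [] => simp at hsum
    | [(w, p)] =>
      simp only [List.map_cons, List.map_nil, List.sum_cons, List.sum_nil, add_zero] at hsum ⊢
      rw [hsum, one_smul]
      exact hKS (hmem (w, p) (by simp)).2
    | (w₁, p₁) :: (w₂, p₂) :: rest =>
      have hrestlen : rest.length + 1 ≤ n := by
        simp only [List.length_cons] at hl; omega
      have hmem₁ := (hmem (w₁, p₁) (by simp)).1
      have hmem₂ := (hmem (w₂, p₂) (by simp)).1
      have hp₁K := (hmem (w₁, p₁) (by simp)).2
      have hp₂K := (hmem (w₂, p₂) (by simp)).2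
      have hrestmem : ∀ x ∈ rest, 0 ≤ x.1 ∧ x.2 ∈ K := fun x hx => hmem x (by simp [hx])
      simp only [List.map_cons, List.sum_cons] at hsum ⊢
      by_cases h₁ : w₁ = 0
      · have := ih ((w₂, p₂) :: rest) (by simpa using hrestlen) (fun x hx => by
            rcases List.mem_cons.mp hx with h | h
            · exact h ▸ ⟨hmem₂, hp₂K⟩
            · exact hrestmem x h)
          (by simpa [h₁] using hsum)
        simpa [h₁] using this
      by_cases h₂ : w₂ = 0
      · have := ih ((w₁, p₁) :: rest) (by simpa using hrestlen) (fun x hx => by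
            rcases List.mem_cons.mp hx with h | h
            · exact h ▸ ⟨hmem₁, hp₁K⟩
            · exact hrestmem x h)
          (by rw [← hsum]; simp [h₂])
        simp only [List.map_cons, List.sum_cons] at this
        simpa [h₂] using this
      · set s := w₁ + w₂ with hs
        have hspos : 0 < s := by
          rcases lt_or_eq_of_le hmem₁ with h | h
          · linarith
          · rcases lt_or_eq_of_le hmem₂ with h' | h'
            · linarith
            · exact absurd h.symm h₁
        set R := (rest.map (fun x => x.1 • x.2)).sum with hR
        have hA : s • p₁ + R ∈ S := by
          have := ih ((s, p₁) :: rest) (by simpa using hrestlen) (fun x hx => by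
            rcases List.mem_cons.mp hx with h | h
            · exact h ▸ ⟨le_of_lt hspos, hp₁K⟩
            · exact hrestmem x h) (by rw [← hsum]; simp; ring)
          simpa using this
        have hB : s • p₂ + R ∈ S := by
          have := ih ((s, p₂) :: rest) (by simpa using hrestlen) (fun x hx => by
            rcases List.mem_cons.mp hx with h | h
            · exact h ▸ ⟨le_of_lt hspos, hp₂K⟩
            · exact hrestmem x h) (by rw [← hsum]; simp; ring)
          simpa using this
        have hdiff : (s • p₁ + R) - (s • p₂ + R) ∈ Λ := by
          have : (s • p₁ + R) - (s • p₂ + R) = s • (p₁ - p₂) := by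
            rw [smul_sub]; abel
          rw [this]
          exact hΛ.2 _ (hcomp p₁ hp₁K p₂ hp₂K) s
        have hseg : w₁ • p₁ + (w₂ • p₂ + R) ∈ segment ℝ (s • p₁ + R) (s • p₂ + R) := by
          refine ⟨w₁ / s, w₂ / s, div_nonneg hmem₁ hspos.le, div_nonneg hmem₂ hspos.le,
            by field_simp; exact hs.symm, ?_⟩
          have hsne : s ≠ 0 := hspos.ne'
          have h3 : (w₁ / s) • R + (w₂ / s) • R = R := by
            rw [← add_smul, ← add_div, ← hs, div_self hsne, one_smul]
          rw [smul_add, smul_add, smul_smul, smul_smul, div_mul_cancel₀ _ hsne,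
            div_mul_cancel₀ _ hsne, show w₁ • p₁ + (w₁ / s) • R + (w₂ • p₂ + (w₂ / s) • R)
              = w₁ • p₁ + (w₂ • p₂ + ((w₁ / s) • R + (w₂ / s) • R)) from by abel, h3]
        exact hS _ hA _ hB hdiff hseg

/-- If the cone `Λ` is complete with respect to `K` (i.e. `p - q ∈ Λ` for all
`p, q ∈ K`), then the `Λ`-convex hull of `K` equals its convex hull. -/
theorem stmt12 (M : ℕ) (Λ K : Set (Fin M → ℝ)) (hΛ : IsCone Λ)
    (hcomp : ∀ p ∈ K, ∀ q ∈ K, p - q ∈ Λ) :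
    lambdaHull Λ K = convexHull ℝ K := by
  apply Set.Subset.antisymm
  · apply Set.sInter_subset_of_mem
    exact ⟨subset_convexHull ℝ K, fun p hp q hq _ =>
      (convex_convexHull ℝ K).segment_subset hp hq⟩
  · intro x hx
    rw [convexHull_eq] at hx
    obtain ⟨ι, t, w, z, hw₀, hw₁, hz, hx⟩ := hx
    intro S hS
    obtain ⟨hKS, hSc⟩ := hS
    have := key_lemma Λ K hΛ hcomp S hKS hSc (t.toList.map fun i => (w i, z i)).length
      (t.toList.map fun i => (w i, z i)) le_rfl
      (fun p hp => by
        simp only [List.mem_map] at hp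
        obtain ⟨i, hi, rfl⟩ := hp
        exact ⟨hw₀ i (Finset.mem_toList.mp hi), hz i (Finset.mem_toList.mp hi)⟩)
      (by rw [List.map_map]
          have := list_sum_map_toList t w
          simpa [Function.comp] using this.trans hw₁)
    rw [List.map_map] at this
    have heq : ((t.toList.map ((fun x : ℝ × (Fin M → ℝ) => x.1 • x.2) ∘ fun i => (w i, z i)))).sum
        = ∑ i ∈ t, w i • z i := by
      have := list_sum_map_toList t (fun i => w i • z i)
      simpa [Function.comp] using this
    rw [heq] at this
    rwa [← hx, Finset.centerMass_eq_of_sum_1 _ _ hw₁]
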